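/- Let P be a non-trivial product distribution on {0,1}^n (i.e., the coordinates z_1,...,z_n are independent with p_j = Pr[z_j = 1] satisfying 0 < p_j < 1 for all j). If A ⊆ {0,1}^n is an antichain with respect to the coordinatewise partial order (equivalently, inclusion of the corresponding subsets of [n]), then Pr_{z∼P}[z ∈ A] ≤ max_{ℓ ∈ {0,1,...,n}} Pr_{z∼P}[|z| = ℓ], where |z| denotes the number of coordinates of z equal to 1. -/

import Mathlib

open Finset

/-- The probability that a sample from the product distribution on `{0,1}^n`
with parameters `p` equals the indicator vector of the set `s ⊆ [n]`
(i.e. coordinates in `s` equal `1`, the others equal `0`). -/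
def prodWeight {n : ℕ} (p : Fin n → ℝ) (s : Finset (Fin n)) : ℝ :=
  (∏ j ∈ s, p j) * ∏ j ∈ sᶜ, (1 - p j)

namespace SpernerAux
variable {n : ℕ} {p : Fin n → ℝ}

def mu (p : Fin n → ℝ) (V s : Finset (Fin n)) : ℝ :=
  (∏ j ∈ s, p j) * ∏ j ∈ V \ s, (1 - p j)

def layer (V : Finset (Fin n)) (ℓ : ℕ) : Finset (Finset (Fin n)) :=
  V.powerset.filter (fun s => s.card = ℓ)

def W (p : Fin n → ℝ) (V : Finset (Fin n)) (ℓ : ℕ) : ℝ := ∑ s ∈ layer V ℓ, mu p V s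

def shUp (V : Finset (Fin n)) (ℓ : ℕ) (S : Finset (Finset (Fin n))) :
    Finset (Finset (Fin n)) :=
  (layer V (ℓ+1)).filter (fun t => ∃ s ∈ S, s ⊆ t)

lemma mem_layer {V s : Finset (Fin n)} {ℓ : ℕ} :
    s ∈ layer V ℓ ↔ s ⊆ V ∧ s.card = ℓ := by simp [layer]

lemma mu_pos (hp : ∀ j, 0 < p j ∧ p j < 1) (V s : Finset (Fin n)) : 0 < mu p V s :=
  mul_pos (prod_pos fun j _ => (hp j).1) (prod_pos fun j _ => by linarith [(hp j).2])

lemma mu_nonneg (hp : ∀ j, 0 < p j ∧ p j < 1) (V s : Finset (Fin n)) : 0 ≤ mu p V s :=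
  (mu_pos hp V s).le

lemma sum_mu_nonneg (hp : ∀ j, 0 < p j ∧ p j < 1) (V : Finset (Fin n))
    (S : Finset (Finset (Fin n))) : 0 ≤ ∑ s ∈ S, mu p V s :=
  Finset.sum_nonneg fun s _ => mu_nonneg hp V s

lemma sum_mu_le (hp : ∀ j, 0 < p j ∧ p j < 1) (V : Finset (Fin n))
    {S T : Finset (Finset (Fin n))} (h : S ⊆ T) :
    ∑ s ∈ S, mu p V s ≤ ∑ s ∈ T, mu p V s :=
  Finset.sum_le_sum_of_subset_of_nonneg h fun s _ _ => mu_nonneg hp V s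

lemma W_nonneg (hp : ∀ j, 0 < p j ∧ p j < 1) (V : Finset (Fin n)) (ℓ : ℕ) :
    0 ≤ W p V ℓ := sum_mu_nonneg hp V _

lemma W_pos (hp : ∀ j, 0 < p j ∧ p j < 1) {V : Finset (Fin n)} {ℓ : ℕ}
    (h : ℓ ≤ V.card) : 0 < W p V ℓ := by
  obtain ⟨t, ht, hcard⟩ := Finset.exists_subset_card_eq h
  refine Finset.sum_pos' (fun s _ => mu_nonneg hp V s) ⟨t, ?_, mu_pos hp V t⟩
  exact mem_layer.mpr ⟨ht, hcard⟩

lemma W_zero {V : Finset (Fin n)} {ℓ : ℕ} (h : V.card < ℓ) : W p V ℓ = 0 := by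
  have : layer V ℓ = ∅ := by
    refine Finset.filter_eq_empty_iff.mpr ?_
    intro s hs
    have := Finset.card_le_card (Finset.mem_powerset.mp hs)
    omega
  simp [W, this]

lemma mu_insert_of_not_mem {x : Fin n} {V s : Finset (Fin n)} (hx : x ∉ V) (hs : s ⊆ V) :
    mu p (insert x V) s = (1 - p x) * mu p V s := by
  have hxs : x ∉ s := fun h => hx (hs h)
  have h1 : insert x V \ s = insert x (V \ s) := by
    rw [Finset.insert_sdiff_of_notMem _ hxs]
  have h2 : x ∉ V \ s := fun h => hx (Finset.mem_sdiff.mp h).1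
  rw [mu, mu, h1, Finset.prod_insert h2]
  ring

lemma mu_insert_insert {x : Fin n} {V s : Finset (Fin n)} (hx : x ∉ V) (hs : s ⊆ V) :
    mu p (insert x V) (insert x s) = p x * mu p V s := by
  have hxs : x ∉ s := fun h => hx (hs h)
  have h1 : insert x V \ insert x s = V \ s := by
    ext j
    simp only [Finset.mem_sdiff, Finset.mem_insert]
    constructor
    · rintro ⟨h | h, h2⟩
      · exact absurd (Or.inl h) h2
      · exact ⟨h, fun hj => h2 (Or.inr hj)⟩
    · rintro ⟨h, h2⟩
      exact ⟨Or.inr h, by rintro (rfl | hj); exact hx h; exact h2 hj⟩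
  rw [mu, mu, h1, Finset.prod_insert hxs]
  ring

lemma sum_mu_insert_left {x : Fin n} {V : Finset (Fin n)} (hx : x ∉ V)
    {S : Finset (Finset (Fin n))} (hS : ∀ s ∈ S, s ⊆ V) :
    ∑ s ∈ S, mu p (insert x V) s = (1 - p x) * ∑ s ∈ S, mu p V s := by
  rw [Finset.mul_sum]
  exact Finset.sum_congr rfl fun s hs => mu_insert_of_not_mem hx (hS s hs)

lemma sum_mu_insert_image {x : Fin n} {V : Finset (Fin n)} (hx : x ∉ V)
    {S : Finset (Finset (Fin n))} (hS : ∀ s ∈ S, s ⊆ V) :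
    ∑ t ∈ S.image (insert x), mu p (insert x V) t = p x * ∑ s ∈ S, mu p V s := by
  rw [Finset.sum_image, Finset.mul_sum]
  · exact Finset.sum_congr rfl fun s hs => mu_insert_insert hx (hS s hs)
  · intro a ha b hb hab
    have hxa : x ∉ a := fun h => hx (hS a ha h)
    have hxb : x ∉ b := fun h => hx (hS b hb h)
    rw [← Finset.erase_insert hxa, ← Finset.erase_insert hxb, hab]

lemma filter_mem_eq_image {x : Fin n} (S : Finset (Finset (Fin n))) :
    S.filter (fun s => x ∈ s)
      = ((S.filter (fun s => x ∈ s)).image (fun s => s.erase x)).image (insert x) := by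
  ext t
  simp only [Finset.mem_image, Finset.mem_filter]
  constructor
  · intro ⟨ht, hxt⟩
    exact ⟨t.erase x, ⟨t, ⟨ht, hxt⟩, rfl⟩, Finset.insert_erase hxt⟩
  · rintro ⟨u, ⟨s, ⟨hs, hxs⟩, rfl⟩, rfl⟩
    rw [Finset.insert_erase hxs]
    exact ⟨hs, hxs⟩

lemma layer_zero (V : Finset (Fin n)) : layer V 0 = {∅} := by
  ext s
  simp only [mem_layer, Finset.card_eq_zero, Finset.mem_singleton]
  constructor
  · exact fun h => h.2
  · rintro rfl; exact ⟨Finset.empty_subset V, rfl⟩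

lemma filter_layer_not {x : Fin n} {V : Finset (Fin n)} (hx : x ∉ V) (ℓ : ℕ) :
    (layer (insert x V) ℓ).filter (fun s => x ∉ s) = layer V ℓ := by
  ext s
  simp only [Finset.mem_filter, mem_layer]
  constructor
  · rintro ⟨⟨hsub, hcard⟩, hxs⟩
    refine ⟨fun j hj => ?_, hcard⟩
    rcases Finset.mem_insert.mp (hsub hj) with rfl | h
    · exact absurd hj hxs
    · exact h
  · rintro ⟨hsub, hcard⟩
    exact ⟨⟨hsub.trans (Finset.subset_insert x V), hcard⟩, fun h => hx (hsub h)⟩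

lemma erase_image_filter_layer {x : Fin n} {V : Finset (Fin n)} (hx : x ∉ V) (ℓ : ℕ) :
    ((layer (insert x V) (ℓ+1)).filter (fun s => x ∈ s)).image (fun s => s.erase x)
      = layer V ℓ := by
  ext u
  simp only [Finset.mem_image, Finset.mem_filter, mem_layer]
  constructor
  · rintro ⟨s, ⟨⟨hsub, hcard⟩, hxs⟩, rfl⟩
    constructor
    · intro j hj
      have hj' := Finset.mem_erase.mp hj
      rcases Finset.mem_insert.mp (hsub hj'.2) with rfl | h
      · exact absurd rfl hj'.1
      · exact h
    · simp [Finset.card_erase_of_mem hxs, hcard]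
  · rintro ⟨hsub, hcard⟩
    have hxu : x ∉ u := fun h => hx (hsub h)
    refine ⟨insert x u, ⟨⟨?_, ?_⟩, Finset.mem_insert_self x u⟩, Finset.erase_insert hxu⟩
    · exact Finset.insert_subset_insert x hsub
    · rw [Finset.card_insert_of_notMem hxu, hcard]

lemma W_insert_zero {x : Fin n} {V : Finset (Fin n)} (hx : x ∉ V) :
    W p (insert x V) 0 = (1 - p x) * W p V 0 := by
  rw [W, W, layer_zero, layer_zero, Finset.sum_singleton, Finset.sum_singleton,
    mu_insert_of_not_mem hx (Finset.empty_subset V)]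

lemma mem_layer_subsetV {V : Finset (Fin n)} {ℓ : ℕ} :
    ∀ s ∈ layer V ℓ, s ⊆ V := fun _ hs => (mem_layer.mp hs).1

lemma W_insert_succ {x : Fin n} {V : Finset (Fin n)} (hx : x ∉ V) (ℓ : ℕ) :
    W p (insert x V) (ℓ+1) = (1 - p x) * W p V (ℓ+1) + p x * W p V ℓ := by
  rw [W, ← Finset.sum_filter_add_sum_filter_not (layer (insert x V) (ℓ+1))
    (fun s => x ∈ s)]
  rw [filter_layer_not hx (ℓ+1), filter_mem_eq_image, erase_image_filter_layer hx ℓ]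
  rw [sum_mu_insert_left hx mem_layer_subsetV, sum_mu_insert_image hx mem_layer_subsetV]
  rw [W, W]
  ring

lemma shUp_subset_layer {V : Finset (Fin n)} {ℓ : ℕ} {S : Finset (Finset (Fin n))} :
    shUp V ℓ S ⊆ layer V (ℓ+1) := Finset.filter_subset _ _

lemma mem_shUp {V t : Finset (Fin n)} {ℓ : ℕ} {S : Finset (Finset (Fin n))} :
    t ∈ shUp V ℓ S ↔ (t ⊆ V ∧ t.card = ℓ+1) ∧ ∃ s ∈ S, s ⊆ t := by
  simp [shUp, mem_layer]

lemma shUp_mono {V : Finset (Fin n)} {ℓ : ℕ} {S T : Finset (Finset (Fin n))}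
    (h : S ⊆ T) : shUp V ℓ S ⊆ shUp V ℓ T := by
  intro t ht
  obtain ⟨h1, s, hs, hst⟩ := mem_shUp.mp ht
  exact mem_shUp.mpr ⟨h1, s, h hs, hst⟩

lemma shUp_filter_not {x : Fin n} {V : Finset (Fin n)} (hx : x ∉ V) (m : ℕ)
    (S : Finset (Finset (Fin n))) :
    (shUp (insert x V) (m+1) S).filter (fun t => x ∉ t)
      = shUp V (m+1) (S.filter (fun s => x ∉ s)) := by
  ext t
  simp only [Finset.mem_filter, mem_shUp]
  constructor
  · rintro ⟨⟨⟨hsub, hcard⟩, s, hs, hst⟩, hxt⟩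
    have htV : t ⊆ V := by
      intro j hj
      rcases Finset.mem_insert.mp (hsub hj) with rfl | h
      · exact absurd hj hxt
      · exact h
    exact ⟨⟨htV, hcard⟩, s, ⟨hs, fun h => hxt (hst h)⟩, hst⟩
  · rintro ⟨⟨htV, hcard⟩, s, ⟨hs, _⟩, hst⟩
    have hxt : x ∉ t := fun h => hx (htV h)
    exact ⟨⟨⟨htV.trans (Finset.subset_insert x V), hcard⟩, s, hs, hst⟩, hxt⟩

lemma shUp_filter_mem {x : Fin n} {V : Finset (Fin n)} (hx : x ∉ V) (m : ℕ)
    {S : Finset (Finset (Fin n))} (hS : S ⊆ layer (insert x V) (m+1)) :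
    (shUp (insert x V) (m+1) S).filter (fun t => x ∈ t)
      = ((S.filter (fun s => x ∉ s))
          ∪ shUp V m ((S.filter (fun s => x ∈ s)).image (fun s => s.erase x))).image
          (insert x) := by
  ext t
  simp only [Finset.mem_filter, mem_shUp, Finset.mem_image, Finset.mem_union]
  constructor
  · rintro ⟨⟨⟨hsub, hcard⟩, s, hs, hst⟩, hxt⟩
    refine ⟨t.erase x, ?_, Finset.insert_erase hxt⟩
    have herV : t.erase x ⊆ V := by
      intro j hj
      have hj' := Finset.mem_erase.mp hj
      rcases Finset.mem_insert.mp (hsub hj'.2) with rfl | h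
      · exact absurd rfl hj'.1
      · exact h
    have hercard : (t.erase x).card = m + 1 := by
      simp [Finset.card_erase_of_mem hxt, hcard]
    by_cases hxs : x ∈ s
    · exact Or.inr ⟨⟨herV, hercard⟩, s.erase x, ⟨s, ⟨hs, hxs⟩, rfl⟩,
        Finset.erase_subset_erase x hst⟩
    · left
      have hstt : s ⊆ t.erase x := by
        intro j hj
        exact Finset.mem_erase.mpr ⟨fun h => hxs (h ▸ hj), hst hj⟩
      have hscard : s.card = m + 1 := (mem_layer.mp (hS hs)).2
      have hseq : s = t.erase x :=
        Finset.eq_of_subset_of_card_le hstt (by rw [hercard, hscard])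
      exact ⟨hseq ▸ hs, Finset.notMem_erase x t⟩
  · rintro ⟨u, hu | hu, rfl⟩
    · obtain ⟨huS, hxu⟩ := hu
      have huV : u ⊆ V := by
        intro j hj
        rcases Finset.mem_insert.mp ((mem_layer.mp (hS huS)).1 hj) with rfl | h
        · exact absurd hj hxu
        · exact h
      have hucard : u.card = m + 1 := (mem_layer.mp (hS huS)).2
      refine ⟨⟨⟨?_, ?_⟩, u, huS, Finset.subset_insert x u⟩, Finset.mem_insert_self x u⟩
      · exact Finset.insert_subset_insert x huV
      · rw [Finset.card_insert_of_notMem hxu, hucard]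
    · obtain ⟨⟨huV, hucard⟩, s', ⟨s, ⟨hsS, hxs⟩, rfl⟩, hsu⟩ := hu
      have hxu : x ∉ u := fun h => hx (huV h)
      refine ⟨⟨⟨?_, ?_⟩, s, hsS, ?_⟩, Finset.mem_insert_self x u⟩
      · exact Finset.insert_subset_insert x huV
      · rw [Finset.card_insert_of_notMem hxu, hucard]
      · intro j hj
        by_cases hjx : j = x
        · exact hjx ▸ Finset.mem_insert_self x u
        · exact Finset.mem_insert_of_mem (hsu (Finset.mem_erase.mpr ⟨hjx, hj⟩))

lemma logConcave (hp : ∀ j, 0 < p j ∧ p j < 1) (V : Finset (Fin n)) :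
    ∀ ℓ : ℕ, W p V ℓ * W p V (ℓ+2) ≤ W p V (ℓ+1) ^ 2 := by
  induction V using Finset.induction_on with
  | empty =>
    intro ℓ
    have h2 : W p (∅ : Finset (Fin n)) (ℓ+2) = 0 := W_zero (by simp)
    rw [h2, mul_zero]
    positivity
  | @insert x V hx ih =>
    have hPpos := (hp x).1
    have hQpos : (0:ℝ) < 1 - p x := by linarith [(hp x).2]
    have hW : ∀ k, 0 ≤ W p V k := W_nonneg hp V
    have lc4 : ∀ k : ℕ, W p V k * W p V (k+3) ≤ W p V (k+1) * W p V (k+2) := by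
      intro k
      by_cases h3 : V.card < k + 3
      · rw [W_zero h3, mul_zero]
        exact mul_nonneg (hW _) (hW _)
      · push_neg at h3
        have p1 : 0 < W p V (k+1) := W_pos hp (by omega)
        have p2 : 0 < W p V (k+2) := W_pos hp (by omega)
        have i1 := ih k
        have i2 := ih (k+1)
        have key : (W p V k * W p V (k+3)) * (W p V (k+1) * W p V (k+2))
            ≤ (W p V (k+1) * W p V (k+2)) * (W p V (k+1) * W p V (k+2)) := by
          have := mul_le_mul i1 i2 (mul_nonneg (hW _) (hW _)) (by positivity)
          calc W p V k * W p V (k+3) * (W p V (k+1) * W p V (k+2))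
              = (W p V k * W p V (k+2)) * (W p V (k+1) * W p V (k+3)) := by ring
            _ ≤ W p V (k+1) ^ 2 * W p V (k+2) ^ 2 := this
            _ = (W p V (k+1) * W p V (k+2)) * (W p V (k+1) * W p V (k+2)) := by ring
        exact le_of_mul_le_mul_right key (by positivity)
    intro ℓ
    match ℓ with
    | 0 =>
      rw [W_insert_zero hx, W_insert_succ hx 1, W_insert_succ hx 0]
      have i0 := ih 0
      nlinarith [mul_le_mul_of_nonneg_left i0 (mul_pos hQpos hQpos).le,
        mul_nonneg (mul_pos hQpos hPpos).le (mul_nonneg (hW 0) (hW 1)),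
        sq_nonneg (p x * W p V 0)]
    | (k+1) =>
      rw [W_insert_succ hx k, W_insert_succ hx (k+1), W_insert_succ hx (k+2)]
      have i1 := ih k
      have i2 := ih (k+1)
      have i4 := lc4 k
      nlinarith [mul_le_mul_of_nonneg_left i1 (mul_pos hPpos hPpos).le,
        mul_le_mul_of_nonneg_left i2 (mul_pos hQpos hQpos).le,
        mul_le_mul_of_nonneg_left i4 (mul_pos hQpos hPpos).le]

lemma arith3 {Wm W0 W1 a1 b0 d e : ℝ} (hWm : 0 ≤ Wm) (hW1 : 0 ≤ W1)
    (hW0pos : 0 < W0) (hd : 0 ≤ d) (hIH : W0 * a1 ≤ Wm * (e + d))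
    (hE : W1 * e ≤ W0 * b0) (hlc : W1 * Wm ≤ W0 ^ 2) :
    W1 * a1 ≤ W0 * d + Wm * b0 := by
  have key : W0 * (W1 * a1) ≤ W0 * (W0 * d + Wm * b0) := by
    nlinarith [mul_le_mul_of_nonneg_left hIH hW1, mul_le_mul_of_nonneg_left hE hWm,
      mul_le_mul_of_nonneg_right hlc hd]
  exact le_of_mul_le_mul_left key hW0pos

lemma arith_main {Q P Wm W0 W1 a0 a1 b0 c : ℝ} (hQ : 0 < Q) (hP : 0 < P)
    (h1 : W1 * a0 ≤ W0 * b0) (h2 : W0 * a1 ≤ Wm * c)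
    (h3 : W1 * a1 + W0 * a0 ≤ W0 * c + Wm * b0) :
    (Q * W1 + P * W0) * (Q * a0 + P * a1) ≤ (Q * W0 + P * Wm) * (Q * b0 + P * c) := by
  nlinarith [mul_le_mul_of_nonneg_left h1 (mul_pos hQ hQ).le,
    mul_le_mul_of_nonneg_left h2 (mul_pos hP hP).le,
    mul_le_mul_of_nonneg_left h3 (mul_pos hQ hP).le]

lemma nmp (hp : ∀ j, 0 < p j ∧ p j < 1) (V : Finset (Fin n)) :
    ∀ (ℓ : ℕ) (S : Finset (Finset (Fin n))), S ⊆ layer V ℓ →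
      W p V (ℓ+1) * ∑ s ∈ S, mu p V s ≤ W p V ℓ * ∑ t ∈ shUp V ℓ S, mu p V t := by
  induction V using Finset.induction_on with
  | empty =>
    intro ℓ S _
    have h1 : W p (∅ : Finset (Fin n)) (ℓ+1) = 0 := W_zero (by simp)
    rw [h1, zero_mul]
    exact mul_nonneg (W_nonneg hp ∅ ℓ) (sum_mu_nonneg hp ∅ _)
  | @insert x V hx ih =>
    intro ℓ S hS
    have hQpos : (0:ℝ) < 1 - p x := by linarith [(hp x).2]
    have hPpos := (hp x).1
    match ℓ with
    | 0 =>
      have hS' : S ⊆ {∅} := by rw [layer_zero] at hS; exact hS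
      rcases Finset.subset_singleton_iff.mp hS' with rfl | rfl
      · simp [shUp]
      · have h₁ : shUp (insert x V) 0 {∅} = layer (insert x V) 1 := by
          apply Finset.filter_true_of_mem
          intro t _
          exact ⟨∅, Finset.mem_singleton_self ∅, Finset.empty_subset t⟩
        have h₂ : W p (insert x V) 0 = mu p (insert x V) ∅ := by
          rw [W, layer_zero, Finset.sum_singleton]
        have h₃ : ∑ t ∈ layer (insert x V) (0+1), mu p (insert x V) t
            = W p (insert x V) (0+1) := rfl
        rw [Finset.sum_singleton, h₁, h₃, h₂]
        exact le_of_eq (mul_comm _ _)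
    | (m+1) =>
      have hS₀layer : S.filter (fun s => x ∉ s) ⊆ layer V (m+1) := by
        intro s hs
        obtain ⟨hsS, hxs⟩ := Finset.mem_filter.mp hs
        obtain ⟨hsub, hcard⟩ := mem_layer.mp (hS hsS)
        refine mem_layer.mpr ⟨fun j hj => ?_, hcard⟩
        rcases Finset.mem_insert.mp (hsub hj) with rfl | h
        · exact absurd hj hxs
        · exact h
      have hS₁layer : (S.filter (fun s => x ∈ s)).image (fun s => s.erase x)
          ⊆ layer V m := by
        intro u hu
        obtain ⟨s, hsf, rfl⟩ := Finset.mem_image.mp hu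
        obtain ⟨hsS, hxs⟩ := Finset.mem_filter.mp hsf
        obtain ⟨hsub, hcard⟩ := mem_layer.mp (hS hsS)
        refine mem_layer.mpr ⟨fun j hj => ?_, by simp [Finset.card_erase_of_mem hxs, hcard]⟩
        have hj' := Finset.mem_erase.mp hj
        rcases Finset.mem_insert.mp (hsub hj'.2) with rfl | h
        · exact absurd rfl hj'.1
        · exact h
      have hTlayer : (S.filter (fun s => x ∉ s))
          ∪ shUp V m ((S.filter (fun s => x ∈ s)).image (fun s => s.erase x))
          ⊆ layer V (m+1) := Finset.union_subset hS₀layer shUp_subset_layer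
      have hsplitS : ∑ s ∈ S, mu p (insert x V) s
          = (1 - p x) * ∑ s ∈ S.filter (fun s => x ∉ s), mu p V s
            + p x * ∑ u ∈ (S.filter (fun s => x ∈ s)).image (fun s => s.erase x),
                mu p V u := by
        have hpart : ∑ s ∈ S.filter (fun s => x ∈ s), mu p (insert x V) s
            = p x * ∑ u ∈ (S.filter (fun s => x ∈ s)).image (fun s => s.erase x),
                mu p V u := by
          conv_lhs => rw [filter_mem_eq_image S]
          exact sum_mu_insert_image hx (fun u hu => (mem_layer.mp (hS₁layer hu)).1)
        rw [← Finset.sum_filter_add_sum_filter_not S (fun s => x ∈ s), hpart,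
          sum_mu_insert_left hx (fun s hs => (mem_layer.mp (hS₀layer hs)).1)]
        ring
      have hsplitSh : ∑ t ∈ shUp (insert x V) (m+1) S, mu p (insert x V) t
          = (1 - p x) * ∑ t ∈ shUp V (m+1) (S.filter (fun s => x ∉ s)), mu p V t
            + p x * ∑ u ∈ (S.filter (fun s => x ∉ s))
                ∪ shUp V m ((S.filter (fun s => x ∈ s)).image (fun s => s.erase x)),
                mu p V u := by
        rw [← Finset.sum_filter_add_sum_filter_not (shUp (insert x V) (m+1) S)
            (fun t => x ∈ t),
          shUp_filter_mem hx m hS,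
          shUp_filter_not hx m S,
          sum_mu_insert_image hx (fun u hu => (mem_layer.mp (hTlayer hu)).1),
          sum_mu_insert_left hx (fun t ht => (mem_layer.mp (shUp_subset_layer ht)).1)]
        ring
      rw [hsplitS, hsplitSh, W_insert_succ hx (m+1), W_insert_succ hx m]
      have h1 := ih (m+1) (S.filter (fun s => x ∉ s)) hS₀layer
      have hIHm := ih m ((S.filter (fun s => x ∈ s)).image (fun s => s.erase x)) hS₁layer
      have hED : ∑ u ∈ shUp V m ((S.filter (fun s => x ∈ s)).image (fun s => s.erase x)),
            mu p V u
          = (∑ u ∈ (shUp V m ((S.filter (fun s => x ∈ s)).image (fun s => s.erase x))).filter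
                (fun u => u ∈ S.filter (fun s => x ∉ s)), mu p V u)
            + ∑ u ∈ (shUp V m ((S.filter (fun s => x ∈ s)).image (fun s => s.erase x))).filter
                (fun u => u ∉ S.filter (fun s => x ∉ s)), mu p V u :=
        (Finset.sum_filter_add_sum_filter_not _ _ _).symm
      have hc : ∑ u ∈ (S.filter (fun s => x ∉ s))
            ∪ shUp V m ((S.filter (fun s => x ∈ s)).image (fun s => s.erase x)), mu p V u
          = (∑ s ∈ S.filter (fun s => x ∉ s), mu p V s)
            + ∑ u ∈ (shUp V m ((S.filter (fun s => x ∈ s)).image (fun s => s.erase x))).filter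
                (fun u => u ∉ S.filter (fun s => x ∉ s)), mu p V u := by
        rw [← Finset.sum_union ?hdisj]
        · apply Finset.sum_congr ?_ (fun _ _ => rfl)
          ext u
          simp only [Finset.mem_union, Finset.mem_filter]
          tauto
        case hdisj =>
          rw [Finset.disjoint_left]
          intro u hu hud
          exact (Finset.mem_filter.mp hud).2 hu
      have h2 : W p V (m+1)
            * ∑ u ∈ (S.filter (fun s => x ∈ s)).image (fun s => s.erase x), mu p V u
          ≤ W p V m * ∑ u ∈ (S.filter (fun s => x ∉ s))
            ∪ shUp V m ((S.filter (fun s => x ∈ s)).image (fun s => s.erase x)),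
              mu p V u := by
        refine hIHm.trans (mul_le_mul_of_nonneg_left ?_ (W_nonneg hp V m))
        exact sum_mu_le hp V Finset.subset_union_right
      have h3' : W p V (m+2)
            * ∑ u ∈ (S.filter (fun s => x ∈ s)).image (fun s => s.erase x), mu p V u
          ≤ W p V (m+1)
              * ∑ u ∈ (shUp V m ((S.filter (fun s => x ∈ s)).image (fun s => s.erase x))).filter
                  (fun u => u ∉ S.filter (fun s => x ∉ s)), mu p V u
            + W p V m * ∑ t ∈ shUp V (m+1) (S.filter (fun s => x ∉ s)), mu p V t := by
        by_cases hcard : m + 1 ≤ V.card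
        · have hEsub : (shUp V m ((S.filter (fun s => x ∈ s)).image (fun s => s.erase x))).filter
              (fun u => u ∈ S.filter (fun s => x ∉ s)) ⊆ layer V (m+1) :=
            (Finset.filter_subset _ _).trans shUp_subset_layer
          have hES₀ : (shUp V m ((S.filter (fun s => x ∈ s)).image (fun s => s.erase x))).filter
              (fun u => u ∈ S.filter (fun s => x ∉ s)) ⊆ S.filter (fun s => x ∉ s) :=
            fun u hu => (Finset.mem_filter.mp hu).2
          have hE1 := (ih (m+1) _ hEsub).trans
            (mul_le_mul_of_nonneg_left (sum_mu_le hp V (shUp_mono hES₀)) (W_nonneg hp V (m+1)))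
          have hlc : W p V (m+2) * W p V m ≤ W p V (m+1) ^ 2 := by
            have := logConcave hp V m
            linarith [this, mul_comm (W p V m) (W p V (m+2))]
          refine arith3 (W_nonneg hp V m) (W_nonneg hp V (m+2)) (W_pos hp hcard)
            (sum_mu_nonneg hp V _) ?_ hE1 hlc
          rw [hED] at hIHm
          linarith [hIHm]
        · push_neg at hcard
          rw [W_zero (show V.card < m + 2 by omega), zero_mul]
          refine add_nonneg (mul_nonneg ?_ (sum_mu_nonneg hp V _))
            (mul_nonneg (W_nonneg hp V m) (sum_mu_nonneg hp V _))
          exact W_nonneg hp V (m+1)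
      have h3 : W p V (m+2)
            * ∑ u ∈ (S.filter (fun s => x ∈ s)).image (fun s => s.erase x), mu p V u
          + W p V (m+1) * ∑ s ∈ S.filter (fun s => x ∉ s), mu p V s
          ≤ W p V (m+1) * ∑ u ∈ (S.filter (fun s => x ∉ s))
              ∪ shUp V m ((S.filter (fun s => x ∈ s)).image (fun s => s.erase x)), mu p V u
            + W p V m * ∑ t ∈ shUp V (m+1) (S.filter (fun s => x ∉ s)), mu p V t := by
        rw [hc, mul_add]
        linarith [h3']
      exact arith_main hQpos hPpos h1 h2 h3

def Nset (p : Fin n → ℝ) (A : Finset (Finset (Fin n))) (ℓ : ℕ) : Finset (Finset (Fin n)) :=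
  (layer (Finset.univ : Finset (Fin n)) ℓ).filter (fun t => ∃ s ∈ A, s ⊆ t)

lemma lym (hp : ∀ j, 0 < p j ∧ p j < 1) (A : Finset (Finset (Fin n)))
    (hA : IsAntichain (· ⊆ ·) (A : Set (Finset (Fin n)))) :
    ∑ k ∈ Finset.range (n+1),
      (∑ s ∈ A.filter (fun s => s.card = k), mu p Finset.univ s) / W p Finset.univ k
      ≤ 1 := by
  have hcardU : (Finset.univ : Finset (Fin n)).card = n := by
    simp
  have hWpos : ∀ k : ℕ, k ≤ n → 0 < W p (Finset.univ : Finset (Fin n)) k := by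
    intro k hk
    exact W_pos hp (by rw [hcardU]; exact hk)
  have hAsub : ∀ k : ℕ, A.filter (fun s => s.card = k) ⊆ Nset p A k := by
    intro k s hs
    obtain ⟨hsA, hcard⟩ := Finset.mem_filter.mp hs
    exact Finset.mem_filter.mpr
      ⟨mem_layer.mpr ⟨Finset.subset_univ s, hcard⟩, s, hsA, Finset.Subset.refl s⟩
  have claim : ∀ ℓ : ℕ, ℓ ≤ n →
      ∑ k ∈ Finset.range (ℓ+1),
        (∑ s ∈ A.filter (fun s => s.card = k), mu p Finset.univ s) / W p Finset.univ k
      ≤ (∑ t ∈ Nset p A ℓ, mu p Finset.univ t) / W p Finset.univ ℓ := by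
    intro ℓ
    induction ℓ with
    | zero =>
      intro _
      rw [Finset.sum_range_one]
      exact (div_le_div_iff_of_pos_right (hWpos 0 (Nat.zero_le n))).mpr (sum_mu_le hp _ (hAsub 0))
    | succ ℓ ihℓ =>
      intro hℓn
      have hℓ : ℓ ≤ n := by omega
      rw [Finset.sum_range_succ]
      have key1 : (∑ t ∈ Nset p A ℓ, mu p Finset.univ t) / W p Finset.univ ℓ
          ≤ (∑ t ∈ shUp Finset.univ ℓ (Nset p A ℓ), mu p Finset.univ t)
            / W p Finset.univ (ℓ+1) := by
        rw [div_le_div_iff₀ (hWpos ℓ hℓ) (hWpos (ℓ+1) hℓn)]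
        have := nmp hp Finset.univ ℓ (Nset p A ℓ) (Finset.filter_subset _ _)
        linarith [this]
      have hsub1 : shUp Finset.univ ℓ (Nset p A ℓ) ⊆ Nset p A (ℓ+1) := by
        intro t ht
        obtain ⟨h1, u, hu, hut⟩ := mem_shUp.mp ht
        obtain ⟨_, s, hsA, hsu⟩ := Finset.mem_filter.mp hu
        exact Finset.mem_filter.mpr ⟨mem_layer.mpr h1, s, hsA, hsu.trans hut⟩
      have hdisj : Disjoint (shUp Finset.univ ℓ (Nset p A ℓ))
          (A.filter (fun s => s.card = ℓ+1)) := by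
        rw [Finset.disjoint_left]
        intro t ht htA
        obtain ⟨⟨_, hcardt⟩, u, hu, hut⟩ := mem_shUp.mp ht
        obtain ⟨hulayer, s, hsA, hsu⟩ := Finset.mem_filter.mp hu
        obtain ⟨htA', _⟩ := Finset.mem_filter.mp htA
        have hcards : s.card ≤ ℓ := by
          have := Finset.card_le_card hsu
          rw [(mem_layer.mp hulayer).2] at this
          exact this
        have hne : s ≠ t := by
          intro h
          rw [h, hcardt] at hcards
          omega
        exact hA hsA htA' hne (hsu.trans hut)
      have key2 : (∑ t ∈ shUp Finset.univ ℓ (Nset p A ℓ), mu p Finset.univ t)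
            + ∑ s ∈ A.filter (fun s => s.card = ℓ+1), mu p Finset.univ s
          ≤ ∑ t ∈ Nset p A (ℓ+1), mu p Finset.univ t := by
        rw [← Finset.sum_union hdisj]
        exact sum_mu_le hp _ (Finset.union_subset hsub1 (hAsub (ℓ+1)))
      calc ∑ k ∈ Finset.range (ℓ+1),
            (∑ s ∈ A.filter (fun s => s.card = k), mu p Finset.univ s) / W p Finset.univ k
            + (∑ s ∈ A.filter (fun s => s.card = ℓ+1), mu p Finset.univ s)
              / W p Finset.univ (ℓ+1)
          ≤ (∑ t ∈ shUp Finset.univ ℓ (Nset p A ℓ), mu p Finset.univ t)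
              / W p Finset.univ (ℓ+1)
            + (∑ s ∈ A.filter (fun s => s.card = ℓ+1), mu p Finset.univ s)
              / W p Finset.univ (ℓ+1) := by
            have := (ihℓ hℓ).trans key1
            linarith [this]
        _ = ((∑ t ∈ shUp Finset.univ ℓ (Nset p A ℓ), mu p Finset.univ t)
              + ∑ s ∈ A.filter (fun s => s.card = ℓ+1), mu p Finset.univ s)
              / W p Finset.univ (ℓ+1) := (add_div _ _ _).symm
        _ ≤ (∑ t ∈ Nset p A (ℓ+1), mu p Finset.univ t) / W p Finset.univ (ℓ+1) :=
            (div_le_div_iff_of_pos_right (hWpos (ℓ+1) hℓn)).mpr key2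
  refine (claim n (le_refl n)).trans ?_
  rw [div_le_one (hWpos n (le_refl n))]
  exact sum_mu_le hp _ (Finset.filter_subset _ _)

end SpernerAux

open SpernerAux in
/-- **Sperner's theorem for product measures.**  If `P` is a non-trivial product
distribution on `{0,1}^n` and `A` is an antichain, then
`Pr[z ∈ A] ≤ max_ℓ Pr[|z| = ℓ]`. -/
theorem sperner_product_measure (n : ℕ) (p : Fin n → ℝ)
    (hp : ∀ j, 0 < p j ∧ p j < 1)
    (A : Finset (Finset (Fin n)))
    (hA : IsAntichain (· ⊆ ·) (A : Set (Finset (Fin n)))) :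
    ∑ s ∈ A, prodWeight p s ≤
      (Finset.range (n + 1)).sup' Finset.nonempty_range_add_one
        (fun ℓ => ∑ s ∈ Finset.univ.filter (fun s : Finset (Fin n) => s.card = ℓ),
          prodWeight p s) := by
  have hpw : ∀ s : Finset (Fin n), prodWeight p s = mu p Finset.univ s := by
    intro s
    rw [prodWeight, mu, Finset.compl_eq_univ_sdiff]
  have hlayer : ∀ ℓ : ℕ, Finset.univ.filter (fun s : Finset (Fin n) => s.card = ℓ)
      = layer (Finset.univ : Finset (Fin n)) ℓ := by
    intro ℓ
    rw [layer, Finset.powerset_univ]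
  have hWeq : ∀ ℓ : ℕ,
      (∑ s ∈ Finset.univ.filter (fun s : Finset (Fin n) => s.card = ℓ), prodWeight p s)
      = W p Finset.univ ℓ := by
    intro ℓ
    rw [hlayer ℓ, W]
    exact Finset.sum_congr rfl fun s _ => hpw s
  set M := (Finset.range (n + 1)).sup' Finset.nonempty_range_add_one
      (fun ℓ => ∑ s ∈ Finset.univ.filter (fun s : Finset (Fin n) => s.card = ℓ),
        prodWeight p s) with hM
  have hMk : ∀ k ∈ Finset.range (n+1), W p (Finset.univ : Finset (Fin n)) k ≤ M := by
    intro k hk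
    rw [← hWeq k, hM]
    exact Finset.le_sup'
      (fun ℓ => ∑ s ∈ Finset.univ.filter (fun s : Finset (Fin n) => s.card = ℓ),
        prodWeight p s) hk
  have hM0 : 0 ≤ M := by
    refine le_trans (W_nonneg hp Finset.univ 0) (hMk 0 ?_)
    exact Finset.mem_range.mpr (Nat.succ_pos n)
  have hcardU : (Finset.univ : Finset (Fin n)).card = n := by simp
  have hmaps : ∀ s ∈ A, s.card ∈ Finset.range (n+1) := by
    intro s _
    refine Finset.mem_range.mpr ?_
    have : s.card ≤ n := by simpa using Finset.card_le_univ s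
    omega
  have hfib : ∑ k ∈ Finset.range (n+1),
        ∑ s ∈ A.filter (fun s => s.card = k), mu p Finset.univ s
      = ∑ s ∈ A, mu p Finset.univ s :=
    Finset.sum_fiberwise_of_maps_to hmaps _
  calc ∑ s ∈ A, prodWeight p s
      = ∑ s ∈ A, mu p Finset.univ s := Finset.sum_congr rfl fun s _ => hpw s
    _ = ∑ k ∈ Finset.range (n+1),
          ∑ s ∈ A.filter (fun s => s.card = k), mu p Finset.univ s := hfib.symm
    _ ≤ ∑ k ∈ Finset.range (n+1),
          ((∑ s ∈ A.filter (fun s => s.card = k), mu p Finset.univ s)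
            / W p Finset.univ k) * M := by
        refine Finset.sum_le_sum fun k hk => ?_
        have hWkpos : 0 < W p (Finset.univ : Finset (Fin n)) k := by
          refine W_pos hp ?_
          rw [hcardU]
          exact Nat.lt_succ_iff.mp (Finset.mem_range.mp hk)
        have hnum : 0 ≤ ∑ s ∈ A.filter (fun s => s.card = k), mu p Finset.univ s :=
          sum_mu_nonneg hp _ _
        calc ∑ s ∈ A.filter (fun s => s.card = k), mu p Finset.univ s
            = ((∑ s ∈ A.filter (fun s => s.card = k), mu p Finset.univ s)
                / W p Finset.univ k) * W p Finset.univ k :=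
              (div_mul_cancel₀ _ hWkpos.ne').symm
          _ ≤ ((∑ s ∈ A.filter (fun s => s.card = k), mu p Finset.univ s)
                / W p Finset.univ k) * M :=
              mul_le_mul_of_nonneg_left (hMk k hk) (div_nonneg hnum hWkpos.le)
    _ = (∑ k ∈ Finset.range (n+1),
          (∑ s ∈ A.filter (fun s => s.card = k), mu p Finset.univ s)
            / W p Finset.univ k) * M := (Finset.sum_mul _ _ _).symm
    _ ≤ 1 * M := mul_le_mul_of_nonneg_right (lym hp A hA) hM0
    _ = M := one_mul M
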